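/- arXiv:2104.09377 — 3 statements merged into one kernel-verified Lean document; each statement's English description precedes it below -/
import Mathlib

section
/- Let d be a positive integer, let n_1, …, n_d be positive integers, let c, K be real numbers, and let μ_1, …, μ_d, P_1, …, P_d : I → ℝ be differentiable functions on a nonempty open interval I ⊆ ℝ satisfying μ_α' = μ_α · P_α and P_α' = P_α² + c on I for each α, and Σ_{α=1}^d n_α μ_α = K at every point of I. Then for every positive integer q and every point of I: if q is odd, Σ_{α=1}^d n_α μ_α P_α^q = 0; and if q is even, Σ_{α=1}^d n_α μ_α P_α^q = ((q−1)!!/q!!)·(−c)^{q/2}·K. -/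
noncomputable def auxA (c K : ℝ) : ℕ → ℝ
  | 0 => K
  | 1 => 0
  | (q + 2) => -(((q : ℝ) + 1) * c / ((q : ℝ) + 2)) * auxA c K q

lemma auxA_odd (c K : ℝ) : ∀ m : ℕ, auxA c K (2 * m + 1) = 0 := by
  intro m
  induction m with
  | zero => rfl
  | succ k ih =>
      have h : 2 * (k + 1) + 1 = (2 * k + 1) + 2 := by ring
      rw [h, auxA, ih, mul_zero]

lemma auxA_even (c K : ℝ) : ∀ m : ℕ,
    auxA c K (2 * m) =
      ((Nat.doubleFactorial (2 * m - 1) : ℝ) / (Nat.doubleFactorial (2 * m) : ℝ)) *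
        (-c) ^ m * K := by
  intro m
  induction m with
  | zero => simp [auxA, Nat.doubleFactorial]
  | succ k ih =>
      have h : 2 * (k + 1) = 2 * k + 2 := by ring
      rw [h, auxA, ih]
      have h1 : Nat.doubleFactorial (2 * k + 2) = (2 * k + 2) * Nat.doubleFactorial (2 * k) :=
        Nat.doubleFactorial_add_two _
      have h2 : Nat.doubleFactorial (2 * k + 2 - 1) =
          (2 * k + 1) * Nat.doubleFactorial (2 * k - 1) := by
        cases k with
        | zero => rfl
        | succ j =>
            have e1 : 2 * (j + 1) + 2 - 1 = (2 * j + 1) + 2 := by omega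
            have e2 : 2 * (j + 1) - 1 = 2 * j + 1 := by omega
            rw [e1, e2, Nat.doubleFactorial_add_two]
            ring_nf
      rw [h1, h2]
      have hdf : (Nat.doubleFactorial (2 * k) : ℝ) ≠ 0 := by
        exact_mod_cast (Nat.doubleFactorial_pos (2 * k)).ne'
      have h2k2 : ((2 * k + 2 : ℕ) : ℝ) ≠ 0 := by positivity
      push_cast
      field_simp
      ring

/-- Lemma 3.3 of the paper: if `μ α ' = μ α * P α`, `P α ' = P α ^ 2 + c` on a nonempty
open interval `I` and `∑ α, n α * μ α = K` on `I`, then for every `q ≥ 1` and `x ∈ I`,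
`∑ α, n α * μ α * P α ^ q` vanishes when `q` is odd and equals
`((q-1)‼ / q‼) * (-c) ^ (q/2) * K` when `q` is even. -/
theorem stmt_3 (d : ℕ) (hd : 0 < d) (n : Fin d → ℕ) (hn : ∀ α, 0 < n α)
    (c K : ℝ)
    (I : Set ℝ) (hIopen : IsOpen I) (hIne : I.Nonempty) (hIconn : I.OrdConnected)
    (μ P : Fin d → ℝ → ℝ)
    (hμ : ∀ α, ∀ x ∈ I, HasDerivAt (μ α) (μ α x * P α x) x)
    (hP : ∀ α, ∀ x ∈ I, HasDerivAt (P α) (P α x ^ 2 + c) x)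
    (hconst : ∀ x ∈ I, ∑ α, (n α : ℝ) * μ α x = K) :
    ∀ q : ℕ, 1 ≤ q → ∀ x ∈ I,
      (Odd q → ∑ α, (n α : ℝ) * μ α x * P α x ^ q = 0) ∧
      (Even q → ∑ α, (n α : ℝ) * μ α x * P α x ^ q =
        ((Nat.doubleFactorial (q - 1) : ℝ) / (Nat.doubleFactorial q : ℝ)) *
          (-c) ^ (q / 2) * K) := by
  set S : ℕ → ℝ → ℝ := fun q x => ∑ α, (n α : ℝ) * μ α x * P α x ^ q with hS
  -- derivative of S (q+1)
  have hderiv : ∀ q : ℕ, ∀ x ∈ I,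
      HasDerivAt (S (q + 1))
        (((q : ℝ) + 2) * S (q + 2) x + ((q : ℝ) + 1) * c * S q x) x := by
    intro q x hx
    have h1 : HasDerivAt (S (q + 1))
        (∑ α, (n α : ℝ) * ((μ α x * P α x) * P α x ^ (q + 1) +
          μ α x * (((q : ℝ) + 1) * P α x ^ q * (P α x ^ 2 + c)))) x := by
      apply HasDerivAt.fun_sum
      intro α _
      have hp : HasDerivAt (fun y => P α y ^ (q + 1))
          (((q : ℝ) + 1) * P α x ^ q * (P α x ^ 2 + c)) x := by
        simpa using (hP α x hx).fun_pow (q + 1)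
      have := ((hμ α x hx).mul hp).const_mul (n α : ℝ)
      simpa [mul_assoc] using this
    convert h1 using 1
    simp only [hS, Finset.mul_sum, ← Finset.sum_add_distrib]
    apply Finset.sum_congr rfl
    intro α _
    ring
  have hderiv0 : ∀ x ∈ I, HasDerivAt (S 0) (S 1 x) x := by
    intro x hx
    have h1 : HasDerivAt (S 0) (∑ α, (n α : ℝ) * (μ α x * P α x)) x := by
      apply HasDerivAt.fun_sum
      intro α _
      have := ((hμ α x hx)).const_mul (n α : ℝ)
      simpa [hS] using this
    simpa [hS, mul_assoc] using h1
  -- constancy => derivative zero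
  have hconstd : ∀ (q : ℕ) (a : ℝ), (∀ x ∈ I, S q x = a) → ∀ x ∈ I, HasDerivAt (S q) 0 x := by
    intro q a ha x hx
    have : S q =ᶠ[nhds x] fun _ => a :=
      Filter.eventuallyEq_of_mem (hIopen.mem_nhds hx) ha
    exact (hasDerivAt_const x a).congr_of_eventuallyEq this
  -- main: S q = auxA c K q on I
  have main : ∀ q : ℕ, (∀ x ∈ I, S q x = auxA c K q) ∧
      (∀ x ∈ I, S (q + 1) x = auxA c K (q + 1)) := by
    intro q
    induction q with
    | zero =>
        constructor
        · intro x hx; simpa [hS, auxA] using hconst x hx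
        · intro x hx
          have h0 : ∀ y ∈ I, S 0 y = K := by
            intro y hy; simpa [hS] using hconst y hy
          have := (hconstd 0 K h0 x hx).unique (hderiv0 x hx)
          simpa [auxA] using this.symm
    | succ k ih =>
        refine ⟨ih.2, ?_⟩
        intro x hx
        have hz := (hconstd (k + 1) _ ih.2 x hx).unique (hderiv k x hx)
        have hk := ih.1 x hx
        rw [hk] at hz
        have hne : ((k : ℝ) + 2) ≠ 0 := by positivity
        have : S (k + 2) x = -(((k : ℝ) + 1) * c / ((k : ℝ) + 2)) * auxA c K k := by
          field_simp at hz ⊢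
          linarith
        rw [this]
        rfl
  intro q hq x hx
  have hSq : S q x = auxA c K q := by
    rcases q with _ | k
    · omega
    · exact (main k).2 x hx
  constructor
  · rintro ⟨m, hm⟩
    have hqe : q = 2 * m + 1 := by omega
    subst hqe
    show S (2 * m + 1) x = 0
    rw [hSq, auxA_odd]
  · rintro ⟨m, hm⟩
    have hq2 : q = 2 * m := by omega
    subst hq2
    show S (2 * m) x = _
    have h2m : 2 * m / 2 = m := by omega
    rw [hSq, auxA_even, h2m]
end

section
/- Let r, s, t be positive real numbers, let λ, μ, ν be nonzero real numbers, and let P, Q, R, c be real numbers. Set N = rλ + sμ + tν and suppose N ≠ 0. If rλP + sμQ + tνR = 0, rλP² + sμQ² + tνR² = −(1/2)·c·N, rλP³ + sμQ³ + tνR³ = 0, rλP⁴ + sμQ⁴ + tνR⁴ = (3/8)·c²·N, and rλP⁵ + sμQ⁵ + tνR⁵ = 0, then P·Q·R = 0. -/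
/-- The conclusion of Case (1) of the proof of Theorem 1.2 of the paper: under the
identities of Lemma 3.3 for `q = 1, …, 5`, at least one of `P, Q, R` vanishes. -/
theorem stmt_8 (r s t lam mu nu P Q R c : ℝ)
    (hr : 0 < r) (hs : 0 < s) (ht : 0 < t)
    (hlam : lam ≠ 0) (hmu : mu ≠ 0) (hnu : nu ≠ 0)
    (N : ℝ) (hN : N = r * lam + s * mu + t * nu) (hN0 : N ≠ 0)
    (h1 : r * lam * P + s * mu * Q + t * nu * R = 0)
    (h2 : r * lam * P ^ 2 + s * mu * Q ^ 2 + t * nu * R ^ 2 = -(1 / 2) * c * N)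
    (h3 : r * lam * P ^ 3 + s * mu * Q ^ 3 + t * nu * R ^ 3 = 0)
    (h4 : r * lam * P ^ 4 + s * mu * Q ^ 4 + t * nu * R ^ 4 = (3 / 8) * c ^ 2 * N)
    (h5 : r * lam * P ^ 5 + s * mu * Q ^ 5 + t * nu * R ^ 5 = 0) :
    P * Q * R = 0 := by
  -- Newton-type identities: P, Q, R are roots of x³ - e₁x² + e₂x - e₃
  have E0 : (c * (P + Q + R) / 2 - P * Q * R) * N = 0 := by
    linear_combination -h3 + (P + Q + R) * h2 - (P * Q + Q * R + P * R) * h1 -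
      (P * Q * R) * hN
  have E2 : (c * (4 * P * Q * R - 3 * c * (P + Q + R)) / 8) * N = 0 := by
    linear_combination (-1 : ℝ) * (h5 - (P + Q + R) * h4 + (P * Q + Q * R + P * R) * h3 -
      (P * Q * R) * h2)
  have k1 : c * (P + Q + R) / 2 - P * Q * R = 0 :=
    (mul_eq_zero.mp E0).resolve_right hN0
  have k2 : c * (4 * P * Q * R - 3 * c * (P + Q + R)) / 8 = 0 :=
    (mul_eq_zero.mp E2).resolve_right hN0
  rcases eq_or_ne c 0 with hc | hc
  · subst hc; linarith
  · have k2' : c * (4 * P * Q * R - 3 * c * (P + Q + R)) = 0 := by linarith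
    have k3 : 4 * P * Q * R - 3 * (c * (P + Q + R)) = 0 := by
      have := (mul_eq_zero.mp k2').resolve_left hc
      linarith
    have k4 : c * (P + Q + R) = 2 * (P * Q * R) := by linarith
    linarith
end

section
/- For every integer n ≥ 3, the cubic polynomial f_{n,3}(t) = n⁴t³ − 2n²(n²−5n+5)t² − (n−1)(2n−5)(3n−5)t − (n−1)(n−2)² has exactly one real root t₀ in the open interval (0, 2). -/
/-- Uniqueness core: two positive roots of the cubic must coincide. -/
lemma stmt_12_aux (N a b : ℝ) (hN : 3 ≤ N) (ha0 : 0 < a) (hb0 : 0 < b)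
    (ha : N ^ 4 * a ^ 3 - 2 * N ^ 2 * (N ^ 2 - 5 * N + 5) * a ^ 2 -
        (N - 1) * (2 * N - 5) * (3 * N - 5) * a - (N - 1) * (N - 2) ^ 2 = 0)
    (hb : N ^ 4 * b ^ 3 - 2 * N ^ 2 * (N ^ 2 - 5 * N + 5) * b ^ 2 -
        (N - 1) * (2 * N - 5) * (3 * N - 5) * b - (N - 1) * (N - 2) ^ 2 = 0) :
    a = b := by
  by_contra hab
  have hab' : a - b ≠ 0 := sub_ne_zero.2 hab
  have key : (a - b) * (N ^ 4 * (a ^ 2 + a * b + b ^ 2)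
      - 2 * N ^ 2 * (N ^ 2 - 5 * N + 5) * (a + b)
      - (N - 1) * (2 * N - 5) * (3 * N - 5)) = 0 := by linear_combination ha - hb
  have h1 : N ^ 4 * (a ^ 2 + a * b + b ^ 2)
      - 2 * N ^ 2 * (N ^ 2 - 5 * N + 5) * (a + b)
      - (N - 1) * (2 * N - 5) * (3 * N - 5) = 0 :=
    (mul_eq_zero.1 key).resolve_left hab'
  have h2 : N ^ 4 * (a * b) * (a + b) - 2 * N ^ 2 * (N ^ 2 - 5 * N + 5) * (a * b)
      + (N - 1) * (N - 2) ^ 2 = 0 := by linear_combination a * h1 - ha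
  set C : ℝ := 2 * (N ^ 2 - 5 * N + 5) * N ^ 2 - N ^ 4 * (a + b) with hC
  have hCp : C * (a * b) = (N - 1) * (N - 2) ^ 2 := by rw [hC]; linear_combination -h2
  have habpos : 0 < a * b := mul_pos ha0 hb0
  have hM : 0 < (N - 1) * (N - 2) ^ 2 := by nlinarith
  have hCpos : 0 < C := by
    by_contra h
    push_neg at h
    nlinarith
  have hfin : N ^ 4 * (a * b) + C * (a + b) = -((N - 1) * (2 * N - 5) * (3 * N - 5)) := by
    rw [hC]; linear_combination -h1
  have hL : 0 < (N - 1) * (2 * N - 5) * (3 * N - 5) := by nlinarith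
  nlinarith [mul_pos hCpos (add_pos ha0 hb0),
    mul_pos (pow_pos (by linarith : (0:ℝ) < N) 4) habpos]

/-- Corollary 1.4 of the paper: for every integer `n ≥ 3`, the cubic polynomial
`f_{n,3}(t) = n⁴t³ − 2n²(n²−5n+5)t² − (n−1)(2n−5)(3n−5)t − (n−1)(n−2)²`
has exactly one real root in the open interval `(0, 2)`. -/
theorem stmt_12 (n : ℕ) (hn : 3 ≤ n) :
    ∃! t₀ : ℝ, t₀ ∈ Set.Ioo (0 : ℝ) 2 ∧
      (n : ℝ) ^ 4 * t₀ ^ 3 - 2 * (n : ℝ) ^ 2 * ((n : ℝ) ^ 2 - 5 * n + 5) * t₀ ^ 2 -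
        ((n : ℝ) - 1) * (2 * (n : ℝ) - 5) * (3 * (n : ℝ) - 5) * t₀ -
        ((n : ℝ) - 1) * ((n : ℝ) - 2) ^ 2 = 0 := by
  set N : ℝ := (n : ℝ) with hNdef
  have hN : 3 ≤ N := by rw [hNdef]; exact_mod_cast hn
  set F : ℝ → ℝ := fun t => N ^ 4 * t ^ 3 - 2 * N ^ 2 * (N ^ 2 - 5 * N + 5) * t ^ 2 -
      (N - 1) * (2 * N - 5) * (3 * N - 5) * t - (N - 1) * (N - 2) ^ 2 with hF
  have hcont : ContinuousOn F (Set.Icc (0 : ℝ) 2) := by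
    apply Continuous.continuousOn
    fun_prop
  have hF0 : F 0 < 0 := by simp only [hF]; nlinarith
  have hF2 : 0 < F 2 := by simp only [hF]; nlinarith
  have hsub := intermediate_value_Ioo (by norm_num : (0:ℝ) ≤ 2) hcont
  have h0mem : (0:ℝ) ∈ Set.Ioo (F 0) (F 2) := ⟨hF0, hF2⟩
  obtain ⟨t₀, ht₀mem, ht₀⟩ := hsub h0mem
  refine ⟨t₀, ⟨ht₀mem, ht₀⟩, ?_⟩
  rintro y ⟨hymem, hy⟩
  exact stmt_12_aux N y t₀ hN hymem.1 ht₀mem.1 hy ht₀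
end
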